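/- Let G be a connected graph with no induced K_{1,3} and no induced hammer, containing an induced 6-cycle C. Then every vertex of G outside C that has a neighbor on C has neighborhood on C inducing a 2K_2 (two disjoint edges of C); moreover two such vertices are adjacent if and only if they have identical neighbor sets on C. -/

import Mathlib

open SimpleGraph

/-- The hammer: a triangle `0,1,2` with a pendant path `0 - 3 - 4`. -/
def hammer : SimpleGraph (Fin 5) :=
  SimpleGraph.fromEdgeSet {s(0, 1), s(0, 2), s(1, 2), s(0, 3), s(3, 4)}

/-- `2K₂`: the disjoint union of two edges, on vertices `0,1,2,3`. -/
def twoK2 : SimpleGraph (Fin 4) := SimpleGraph.fromEdgeSet {s(0, 1), s(2, 3)}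

section Helpers
variable {V : Type*} {G : SimpleGraph V}

lemma no_claw (hclaw : ¬ Nonempty (completeBipartiteGraph (Fin 1) (Fin 3) ↪g G))
    {x a b c : V} (hab : a ≠ b) (hac : a ≠ c) (hbc : b ≠ c)
    (hxa : G.Adj x a) (hxb : G.Adj x b) (hxc : G.Adj x c)
    (nab : ¬ G.Adj a b) (nac : ¬ G.Adj a c) (nbc : ¬ G.Adj b c) : False := by
  apply hclaw
  refine ⟨⟨⟨Sum.elim (fun _ => x) ![a, b, c], ?_⟩, ?_⟩⟩
  · rintro (i | i) (j | j) h
    · simp [Subsingleton.elim i j]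
    · exfalso; revert h; fin_cases j <;>
        simpa using fun h => by simp_all [h ▸ hxa.ne, h ▸ hxb.ne, h ▸ hxc.ne]
    · exfalso; revert h; fin_cases i <;>
        simpa using fun h => by simp_all [h ▸ hxa.ne, h ▸ hxb.ne, h ▸ hxc.ne]
    · congr 1; revert h; fin_cases i <;> fin_cases j <;>
        simp_all [Ne.symm hab, Ne.symm hac, Ne.symm hbc]
  · change ∀ u w, G.Adj (Sum.elim (fun _ => x) ![a, b, c] u) (Sum.elim (fun _ => x) ![a, b, c] w) ↔
      (completeBipartiteGraph (Fin 1) (Fin 3)).Adj u w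
    rintro (i | i) (j | j) <;>
      first
        | (fin_cases i <;> fin_cases j <;>
            simp_all [completeBipartiteGraph, hxa.symm, hxb.symm, hxc.symm,
              G.adj_comm b a, G.adj_comm c a, G.adj_comm c b, G.irrefl])
        | (fin_cases j <;>
            simp_all [completeBipartiteGraph, hxa.symm, hxb.symm, hxc.symm])
        | (fin_cases i <;>
            simp_all [completeBipartiteGraph, hxa.symm, hxb.symm, hxc.symm])

lemma hammer_adj (i j : Fin 5) : hammer.Adj i j ↔
    ((i,j) ∈ [((0:Fin 5),(1:Fin 5)),(1,0),(0,2),(2,0),(1,2),(2,1),(0,3),(3,0),(3,4),(4,3)]) := by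
  rw [hammer, fromEdgeSet_adj]
  simp only [Set.mem_insert_iff, Set.mem_singleton_iff, Sym2.eq, Sym2.rel_iff',
    Prod.mk.injEq, Prod.swap_prod_mk]
  fin_cases i <;> fin_cases j <;> decide

lemma twoK2_adj (i j : Fin 4) : twoK2.Adj i j ↔
    ((i,j) ∈ [((0:Fin 4),(1:Fin 4)),(1,0),(2,3),(3,2)]) := by
  rw [twoK2, fromEdgeSet_adj]
  simp only [Set.mem_insert_iff, Set.mem_singleton_iff, Sym2.eq, Sym2.rel_iff',
    Prod.mk.injEq, Prod.swap_prod_mk]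
  fin_cases i <;> fin_cases j <;> decide

lemma no_hammer (hham : ¬ Nonempty (hammer ↪g G)) {x0 x1 x2 x3 x4 : V}
    (e01 : G.Adj x0 x1) (e02 : G.Adj x0 x2) (e12 : G.Adj x1 x2)
    (e03 : G.Adj x0 x3) (e34 : G.Adj x3 x4)
    (n04 : ¬ G.Adj x0 x4) (n13 : ¬ G.Adj x1 x3) (n14 : ¬ G.Adj x1 x4)
    (n23 : ¬ G.Adj x2 x3) (n24 : ¬ G.Adj x2 x4)
    (d04 : x0 ≠ x4) (d13 : x1 ≠ x3) (d14 : x1 ≠ x4)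
    (d23 : x2 ≠ x3) (d24 : x2 ≠ x4) : False := by
  apply hham
  have d01 := e01.ne; have d02 := e02.ne; have d12 := e12.ne
  have d03 := e03.ne; have d34 := e34.ne
  have n40 : ¬ G.Adj x4 x0 := fun h => n04 h.symm
  have n31 : ¬ G.Adj x3 x1 := fun h => n13 h.symm
  have n41 : ¬ G.Adj x4 x1 := fun h => n14 h.symm
  have n32 : ¬ G.Adj x3 x2 := fun h => n23 h.symm
  have n42 : ¬ G.Adj x4 x2 := fun h => n24 h.symm
  refine ⟨⟨⟨![x0, x1, x2, x3, x4], ?_⟩, ?_⟩⟩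
  · intro i j h
    fin_cases i <;> fin_cases j <;>
      simp_all [Ne.symm d01, Ne.symm d02, Ne.symm d12, Ne.symm d03, Ne.symm d34,
        Ne.symm d04, Ne.symm d13, Ne.symm d14, Ne.symm d23, Ne.symm d24]
  · intro i j
    change G.Adj (![x0, x1, x2, x3, x4] i) (![x0, x1, x2, x3, x4] j) ↔ _
    fin_cases i <;> fin_cases j <;>
      simp_all [hammer_adj, e01.symm, e02.symm, e12.symm, e03.symm, e34.symm, G.irrefl]

/-- Data of an induced 6-cycle together with a vertex `v` off the cycle. -/
structure CycData (G : SimpleGraph V) (v : V) (c : Fin 6 → V) : Prop where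
  inj : Function.Injective c
  adj : ∀ i j, G.Adj (c i) (c j) ↔ (cycleGraph 6).Adj i j
  hv : ∀ i, v ≠ c i

namespace CycData
variable {v : V} {c : Fin 6 → V}

lemma cadj (h : CycData G v c) (i j : Fin 6) (hij : (cycleGraph 6).Adj i j) :
    G.Adj (c i) (c j) := (h.adj i j).2 hij

lemma cnon (h : CycData G v c) (i j : Fin 6) (hij : ¬ (cycleGraph 6).Adj i j) :
    ¬ G.Adj (c i) (c j) := fun hh => hij ((h.adj i j).1 hh)

lemma cne (h : CycData G v c) (i j : Fin 6) (hij : i ≠ j) : c i ≠ c j :=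
  fun e => hij (h.inj e)

lemma rot (h : CycData G v c) (k : Fin 6) : CycData G v (fun t => c (t + k)) where
  inj := fun a b e => add_right_cancel (h.inj e)
  adj := fun i j => (h.adj _ _).trans
    ((by revert i j k; decide : ∀ (k i j : Fin 6),
        (cycleGraph 6).Adj (i + k) (j + k) ↔ (cycleGraph 6).Adj i j) k i j)
  hv := fun i => h.hv _

lemma refl (h : CycData G v c) (k : Fin 6) : CycData G v (fun t => c (k - t)) where
  inj := fun a b e => by
    have h2 : k - a = k - b := h.inj e
    have := congrArg (fun x => k - x) h2
    simpa [sub_sub_cancel] using this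
  adj := fun i j => (h.adj _ _).trans
    ((by revert i j k; decide : ∀ (k i j : Fin 6),
        (cycleGraph 6).Adj (k - i) (k - j) ↔ (cycleGraph 6).Adj i j) k i j)
  hv := fun i => h.hv _

end CycData
end Helpers

section Middle
variable {V : Type*} {G : SimpleGraph V} {v : V} {c : Fin 6 → V}
variable (hclaw : ¬ Nonempty (completeBipartiteGraph (Fin 1) (Fin 3) ↪g G))
variable (hham : ¬ Nonempty (hammer ↪g G))
include hclaw in

lemma L1 (h : CycData G v c) (h0 : G.Adj v (c 0)) :
    G.Adj v (c 1) ∨ G.Adj v (c 5) := by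
  by_contra hcon
  push_neg at hcon
  exact no_claw hclaw (h.hv 1) (h.hv 5) (h.cne 1 5 (by decide)) h0.symm
    (h.cadj 0 1 (by decide)) (h.cadj 0 5 (by decide)) hcon.1 hcon.2
    (h.cnon 1 5 (by decide))

include hham in
lemma L2 (h : CycData G v c) (h0 : G.Adj v (c 0)) (h1 : G.Adj v (c 1))
    (hn4 : ¬ G.Adj v (c 4)) : False := by
  by_cases h3 : G.Adj v (c 3)
  · -- hammer (v, c0, c1, c3, c4)
    exact no_hammer hham h0 h1 (h.cadj 0 1 (by decide)) h3 (h.cadj 3 4 (by decide))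
      hn4 (h.cnon 0 3 (by decide)) (h.cnon 0 4 (by decide)) (h.cnon 1 3 (by decide))
      (h.cnon 1 4 (by decide)) (h.hv 4) (h.cne 0 3 (by decide)) (h.cne 0 4 (by decide))
      (h.cne 1 3 (by decide)) (h.cne 1 4 (by decide))
  · by_cases h2 : G.Adj v (c 2)
    · by_cases h5 : G.Adj v (c 5)
      · -- hammer (v, c1, c2, c5, c4)
        exact no_hammer hham h1 h2 (h.cadj 1 2 (by decide)) h5 (h.cadj 5 4 (by decide))
          hn4 (h.cnon 1 5 (by decide)) (h.cnon 1 4 (by decide)) (h.cnon 2 5 (by decide))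
          (h.cnon 2 4 (by decide)) (h.hv 4) (h.cne 1 5 (by decide)) (h.cne 1 4 (by decide))
          (h.cne 2 5 (by decide)) (h.cne 2 4 (by decide))
      · -- hammer (c2, v, c1, c3, c4)
        exact no_hammer hham h2.symm (h.cadj 2 1 (by decide)) h1 (h.cadj 2 3 (by decide))
          (h.cadj 3 4 (by decide)) (h.cnon 2 4 (by decide)) h3 hn4
          (h.cnon 1 3 (by decide)) (h.cnon 1 4 (by decide)) (h.cne 2 4 (by decide))
          (h.hv 3) (h.hv 4) (h.cne 1 3 (by decide)) (h.cne 1 4 (by decide))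
    · -- hammer (c1, v, c0, c2, c3)
      exact no_hammer hham h1.symm (h.cadj 1 0 (by decide)) h0 (h.cadj 1 2 (by decide))
        (h.cadj 2 3 (by decide)) (h.cnon 1 3 (by decide)) h2 h3
        (h.cnon 0 2 (by decide)) (h.cnon 0 3 (by decide)) (h.cne 1 3 (by decide))
        (h.hv 2) (h.hv 3) (h.cne 0 2 (by decide)) (h.cne 0 3 (by decide))

include hham in
lemma edge_forces (h : CycData G v c) (h0 : G.Adj v (c 0)) (h1 : G.Adj v (c 1)) :
    G.Adj v (c 3) ∧ G.Adj v (c 4) := by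
  constructor
  · by_contra hn
    refine L2 hham (h.refl 1) ?_ ?_ ?_
    · show G.Adj v (c (1 - 0)); simpa using h1
    · show G.Adj v (c (1 - 1)); simpa using h0
    · show ¬ G.Adj v (c (1 - 4))
      have : (1 - 4 : Fin 6) = 3 := by decide
      rw [this]; exact hn
  · by_contra hn
    exact L2 hham h h0 h1 hn

include hclaw hham in
lemma pat0 (h : CycData G v c) (h0 : G.Adj v (c 0)) (h1 : G.Adj v (c 1)) :
    ∀ t : Fin 6, G.Adj v (c t) ↔ (t = 0 ∨ t = 1 ∨ t = 3 ∨ t = 4) := by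
  obtain ⟨h3, h4⟩ := edge_forces hham h h0 h1
  have n2 : ¬ G.Adj v (c 2) := by
    intro h2
    have := edge_forces hham (h.rot 1) (by simpa using h1) (by simpa using h2)
    beta_reduce at this
    have h5 : G.Adj v (c 5) := by
      have e : ((4 : Fin 6) + 1) = 5 := by decide
      have := this.2; rw [e] at this; exact this
    exact no_claw hclaw (h.cne 0 2 (by decide)) (h.cne 0 4 (by decide))
      (h.cne 2 4 (by decide)) h0 h2 h4 (h.cnon 0 2 (by decide))
      (h.cnon 0 4 (by decide)) (h.cnon 2 4 (by decide))
  have n5 : ¬ G.Adj v (c 5) := by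
    intro h5
    have h50 : G.Adj v ((fun t => c (t + 5)) 0) := by simpa using h5
    have h51 : G.Adj v ((fun t => c (t + 5)) 1) := by
      show G.Adj v (c (1 + 5))
      rw [show ((1:Fin 6) + 5) = 0 from by decide]
      exact h0
    have h2 := (edge_forces hham (h.rot 5) h50 h51).1
    simp only [show ((3:Fin 6) + 5) = 2 from by decide] at h2
    exact n2 h2
  intro t
  fin_cases t <;> simp_all <;> decide

include hclaw hham in
lemma char (h : CycData G v c) (i : Fin 6) (hA : G.Adj v (c i)) :
    ∃ j : Fin 6, ∀ t : Fin 6, G.Adj v (c t) ↔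
      (t = j ∨ t = j + 1 ∨ t = j + 3 ∨ t = j + 4) := by
  have hA0 : G.Adj v ((fun t => c (t + i)) 0) := by simpa using hA
  rcases L1 hclaw (h.rot i) hA0 with h1 | h5
  · have H := pat0 hclaw hham (h.rot i) hA0 h1
    refine ⟨i, fun t => ?_⟩
    have := H (t - i)
    rw [show (t - i) + i = t from by abel] at this
    rw [this]
    simp [sub_eq_iff_eq_add', sub_eq_zero]
  · -- G.Adj v (c (5 + i))
    have h5' : G.Adj v ((fun t => c (t + (5 + i))) 0) := by simpa using h5
    have h1' : G.Adj v ((fun t => c (t + (5 + i))) 1) := by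
      show G.Adj v (c (1 + (5 + i)))
      rw [show (1 : Fin 6) + (5 + i) = i from by rw [← add_assoc, show ((1:Fin 6)+5) = 0 from by decide, zero_add]]
      exact hA
    have H := pat0 hclaw hham (h.rot (5 + i)) h5' h1'
    refine ⟨5 + i, fun t => ?_⟩
    have := H (t - (5 + i))
    rw [show (t - (5 + i)) + (5 + i) = t from by abel] at this
    rw [this]
    simp [sub_eq_iff_eq_add', sub_eq_zero]

end Middle

/-- In a connected `{K_{1,3}, hammer}`-free graph with an induced 6-cycle `C`:
any vertex outside `C` with a neighbor on `C` sees a `2K₂` on `C`, and two such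
vertices are adjacent iff they have the same neighbors on `C`. -/
theorem claw_hammer_free_C6_neighbors {V : Type*} (G : SimpleGraph V) (hconn : G.Connected)
    (hclaw : ¬ Nonempty (completeBipartiteGraph (Fin 1) (Fin 3) ↪g G))
    (hham : ¬ Nonempty (hammer ↪g G))
    (f : cycleGraph 6 ↪g G) :
    (∀ v : V, v ∉ Set.range f → (∃ u ∈ Set.range f, G.Adj v u) →
        Nonempty ((G.induce {u | u ∈ Set.range f ∧ G.Adj v u}) ≃g twoK2)) ∧
      (∀ v w : V, v ∉ Set.range f → w ∉ Set.range f →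
        (∃ u ∈ Set.range f, G.Adj v u) → (∃ u ∈ Set.range f, G.Adj w u) → v ≠ w →
        (G.Adj v w ↔ {u | u ∈ Set.range f ∧ G.Adj v u} = {u | u ∈ Set.range f ∧ G.Adj w u})) := by
  classical
  have hcd : ∀ v : V, v ∉ Set.range f → CycData G v (fun i => f i) := fun v hv =>
    ⟨f.injective, fun i j => f.map_rel_iff, fun i e => hv ⟨i, e.symm⟩⟩
  have key : ∀ v : V, v ∉ Set.range f → (∃ u ∈ Set.range f, G.Adj v u) →
      ∃ j : Fin 6, ∀ t : Fin 6, G.Adj v (f t) ↔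
        (t = j ∨ t = j + 1 ∨ t = j + 3 ∨ t = j + 4) := by
    rintro v hv ⟨u, ⟨i, rfl⟩, hadj⟩
    exact char hclaw hham (hcd v hv) i hadj
  constructor
  · -- part 1
    rintro v hv hex
    obtain ⟨j, Hv⟩ := key v hv hex
    have mem : ∀ t : Fin 6, (t = j ∨ t = j + 1 ∨ t = j + 3 ∨ t = j + 4) →
        f t ∈ {u | u ∈ Set.range ⇑f ∧ G.Adj v u} :=
      fun t ht => ⟨⟨t, rfl⟩, (Hv t).2 ht⟩
    let e : Fin 4 → {u | u ∈ Set.range ⇑f ∧ G.Adj v u} := fun i =>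
      ⟨f (![j, j + 1, j + 3, j + 4] i), mem _ (by fin_cases i <;> simp)⟩
    have hbij : Function.Bijective e := by
      constructor
      · intro a b hab
        have h1 : f (![j, j+1, j+3, j+4] a) = f (![j, j+1, j+3, j+4] b) :=
          congrArg Subtype.val hab
        have h2 := f.injective h1
        exact (by decide : ∀ (x : Fin 6) (a b : Fin 4),
          ![x, x+1, x+3, x+4] a = ![x, x+1, x+3, x+4] b → a = b) j a b h2
      · rintro ⟨u, ⟨t, rfl⟩, hadj⟩
        have ht := (Hv t).1 hadj
        have hex2 : ∃ a : Fin 4, ![j, j+1, j+3, j+4] a = t := by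
          rcases ht with h | h | h | h
          exacts [⟨0, h.symm⟩, ⟨1, h.symm⟩, ⟨2, h.symm⟩, ⟨3, h.symm⟩]
        obtain ⟨a, ha⟩ := hex2
        exact ⟨a, Subtype.ext (by simp only [e]; rw [ha])⟩
    have base : ∀ (x : Fin 6) (a b : Fin 4),
        (cycleGraph 6).Adj (![x, x+1, x+3, x+4] a) (![x, x+1, x+3, x+4] b) ↔
          ((a, b) ∈ [((0:Fin 4),(1:Fin 4)),(1,0),(2,3),(3,2)]) := by decide
    let φ : twoK2 ≃g G.induce {u | u ∈ Set.range ⇑f ∧ G.Adj v u} :=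
      { toEquiv := Equiv.ofBijective e hbij
        map_rel_iff' := by
          intro a b
          show (G.induce _).Adj (e a) (e b) ↔ twoK2.Adj a b
          rw [twoK2_adj]
          exact ((hcd v hv).adj _ _).trans (base j a b) }
    exact ⟨φ.symm⟩
  · -- part 2
    rintro v w hv hw hev hew hne
    obtain ⟨j, Hv⟩ := key v hv hev
    obtain ⟨k, Hw⟩ := key w hw hew
    have cv := hcd v hv
    have hfv : ∀ t, v ≠ f t := fun t e => hv ⟨t, e.symm⟩
    have hfw : ∀ t, w ≠ f t := fun t e => hw ⟨t, e.symm⟩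
    have nAdjw : ∀ t : Fin 6, ¬(t = k ∨ t = k + 1 ∨ t = k + 3 ∨ t = k + 4) →
        ¬ G.Adj w (f t) := fun t hnt hh => hnt ((Hw t).1 hh)
    have nAdjv : ∀ t : Fin 6, ¬(t = j ∨ t = j + 1 ∨ t = j + 3 ∨ t = j + 4) →
        ¬ G.Adj v (f t) := fun t hnt hh => hnt ((Hv t).1 hh)
    constructor
    · intro hvw
      obtain ⟨d, hk⟩ : ∃ d : Fin 6, k = j + d := ⟨k - j, by abel⟩
      rcases (by decide : ∀ d : Fin 6, d = 0 ∨ d = 1 ∨ d = 2 ∨ d = 3 ∨ d = 4 ∨ d = 5) d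
        with rfl | rfl | rfl | rfl | rfl | rfl
      · -- d = 0 : same sets
        rw [add_zero] at hk
        subst hk
        ext u
        simp only [Set.mem_setOf_eq]
        constructor
        · rintro ⟨⟨t, rfl⟩, ha⟩
          exact ⟨⟨t, rfl⟩, (Hw t).2 ((Hv t).1 ha)⟩
        · rintro ⟨⟨t, rfl⟩, ha⟩
          exact ⟨⟨t, rfl⟩, (Hv t).2 ((Hw t).1 ha)⟩
      · -- d = 1 : contradiction
        exfalso
        refine no_claw hclaw (hfw j) (hfw (j+3))
          (cv.cne j (j+3) ((by decide : ∀ x : Fin 6, x ≠ x + 3) j))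
          hvw ((Hv j).2 (Or.inl rfl)) ((Hv (j+3)).2 (Or.inr (Or.inr (Or.inl rfl))))
          (nAdjw j ?_) (nAdjw (j+3) ?_)
          (cv.cnon j (j+3) ((by decide : ∀ x : Fin 6, ¬ (cycleGraph 6).Adj x (x+3)) j))
        · rw [hk]
          exact (by decide : ∀ x : Fin 6,
            ¬(x = x+1 ∨ x = x+1+1 ∨ x = x+1+3 ∨ x = x+1+4)) j
        · rw [hk]
          exact (by decide : ∀ x : Fin 6,
            ¬(x+3 = x+1 ∨ x+3 = x+1+1 ∨ x+3 = x+1+3 ∨ x+3 = x+1+4)) j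
      · -- d = 2 : contradiction
        exfalso
        refine no_claw hclaw (hfw (j+1)) (hfw (j+4))
          (cv.cne (j+1) (j+4) ((by decide : ∀ x : Fin 6, x + 1 ≠ x + 4) j))
          hvw ((Hv (j+1)).2 (Or.inr (Or.inl rfl)))
          ((Hv (j+4)).2 (Or.inr (Or.inr (Or.inr rfl))))
          (nAdjw (j+1) ?_) (nAdjw (j+4) ?_)
          (cv.cnon (j+1) (j+4) ((by decide : ∀ x : Fin 6, ¬ (cycleGraph 6).Adj (x+1) (x+4)) j))
        · rw [hk]
          exact (by decide : ∀ x : Fin 6,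
            ¬(x+1 = x+2 ∨ x+1 = x+2+1 ∨ x+1 = x+2+3 ∨ x+1 = x+2+4)) j
        · rw [hk]
          exact (by decide : ∀ x : Fin 6,
            ¬(x+4 = x+2 ∨ x+4 = x+2+1 ∨ x+4 = x+2+3 ∨ x+4 = x+2+4)) j
      · -- d = 3 : same sets
        ext u
        simp only [Set.mem_setOf_eq]
        have harith : ∀ x : Fin 6, x+3+1 = x+4 ∧ x+3+3 = x ∧ x+3+4 = x+1 := by decide
        constructor
        · rintro ⟨⟨t, rfl⟩, ha⟩
          refine ⟨⟨t, rfl⟩, (Hw t).2 ?_⟩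
          rw [hk, (harith j).1, (harith j).2.1, (harith j).2.2]
          have := (Hv t).1 ha
          tauto
        · rintro ⟨⟨t, rfl⟩, ha⟩
          refine ⟨⟨t, rfl⟩, (Hv t).2 ?_⟩
          have := (Hw t).1 ha
          rw [hk, (harith j).1, (harith j).2.1, (harith j).2.2] at this
          tauto
      · -- d = 4 : contradiction
        exfalso
        refine no_claw hclaw (hfv (k+1)) (hfv (k+4))
          (cv.cne (k+1) (k+4) ((by decide : ∀ x : Fin 6, x + 1 ≠ x + 4) k))
          hvw.symm ((Hw (k+1)).2 (Or.inr (Or.inl rfl)))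
          ((Hw (k+4)).2 (Or.inr (Or.inr (Or.inr rfl))))
          (nAdjv (k+1) ?_) (nAdjv (k+4) ?_)
          (cv.cnon (k+1) (k+4) ((by decide : ∀ x : Fin 6, ¬ (cycleGraph 6).Adj (x+1) (x+4)) k))
        · rw [hk]
          exact (by decide : ∀ x : Fin 6,
            ¬(x+4+1 = x ∨ x+4+1 = x+1 ∨ x+4+1 = x+3 ∨ x+4+1 = x+4)) j
        · rw [hk]
          exact (by decide : ∀ x : Fin 6,
            ¬(x+4+4 = x ∨ x+4+4 = x+1 ∨ x+4+4 = x+3 ∨ x+4+4 = x+4)) j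
      · -- d = 5 : contradiction
        exfalso
        refine no_claw hclaw (hfv k) (hfv (k+3))
          (cv.cne k (k+3) ((by decide : ∀ x : Fin 6, x ≠ x + 3) k))
          hvw.symm ((Hw k).2 (Or.inl rfl)) ((Hw (k+3)).2 (Or.inr (Or.inr (Or.inl rfl))))
          (nAdjv k ?_) (nAdjv (k+3) ?_)
          (cv.cnon k (k+3) ((by decide : ∀ x : Fin 6, ¬ (cycleGraph 6).Adj x (x+3)) k))
        · rw [hk]
          exact (by decide : ∀ x : Fin 6,
            ¬(x+5 = x ∨ x+5 = x+1 ∨ x+5 = x+3 ∨ x+5 = x+4)) j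
        · rw [hk]
          exact (by decide : ∀ x : Fin 6,
            ¬(x+5+3 = x ∨ x+5+3 = x+1 ∨ x+5+3 = x+3 ∨ x+5+3 = x+4)) j
    · intro heq
      by_contra hvw
      have hfj_v : f j ∈ {u | u ∈ Set.range ⇑f ∧ G.Adj v u} :=
        ⟨⟨j, rfl⟩, (Hv j).2 (Or.inl rfl)⟩
      have hfj_w : G.Adj w (f j) := (heq ▸ hfj_v).2
      have hnv5 : ¬ G.Adj v (f (j+5)) := fun hh =>
        (by decide : ∀ x : Fin 6, ¬(x+5 = x ∨ x+5 = x+1 ∨ x+5 = x+3 ∨ x+5 = x+4)) j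
          ((Hv _).1 hh)
      have hnw5 : ¬ G.Adj w (f (j+5)) := fun hh => by
        have hm : f (j+5) ∈ {u | u ∈ Set.range ⇑f ∧ G.Adj w u} := ⟨⟨j+5, rfl⟩, hh⟩
        rw [← heq] at hm
        exact hnv5 hm.2
      exact no_claw hclaw hne (hfv (j+5)) (hfw (j+5))
        ((Hv j).2 (Or.inl rfl)).symm hfj_w.symm
        (cv.cadj j (j+5) ((by decide : ∀ x : Fin 6, (cycleGraph 6).Adj x (x+5)) j))
        hvw hnv5 hnw5
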